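/- Let G be a diamond-free graph containing an induced 5-cycle v1v2v3v4v5, with B_{i,i+1} the set of vertices outside the cycle adjacent on the cycle exactly to v_i and v_{i+1}, and A_i the set of vertices outside the cycle adjacent on the cycle only to v_i. Then B_{i,i+1} is anti-complete to A_i ∪ A_{i+1}. -/

import Mathlib

open SimpleGraph

def diamond : SimpleGraph (Fin 4) := (⊤ : SimpleGraph (Fin 4)).deleteEdges {s(0, 1)}

lemma diamond_embed {V : Type*} {G : SimpleGraph V} {w x y z : V}
    (hwx : ¬ G.Adj w x) (hne : w ≠ x)
    (hwy : G.Adj w y) (hwz : G.Adj w z) (hxy : G.Adj x y) (hxz : G.Adj x z)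
    (hyz : G.Adj y z) : Nonempty (diamond ↪g G) := by
  refine ⟨⟨⟨![w, x, y, z], ?_⟩, ?_⟩⟩
  · intro a b hab
    fin_cases a <;> fin_cases b <;> simp_all <;>
      first
      | rfl
      | (exfalso; first
          | exact hwy (hab ▸ hwy)
          | exact G.irrefl (hab ▸ hwy)
          | exact G.irrefl (hab ▸ hwz)
          | exact G.irrefl (hab ▸ hxy)
          | exact G.irrefl (hab ▸ hxz)
          | exact G.irrefl (hab ▸ hyz)
          | exact G.irrefl (hab ▸ hwy.symm)
          | exact G.irrefl (hab ▸ hwz.symm)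
          | exact G.irrefl (hab ▸ hxy.symm)
          | exact G.irrefl (hab ▸ hxz.symm)
          | exact G.irrefl (hab ▸ hyz.symm))
  · have hxw : ¬ G.Adj x w := fun h => hwx h.symm
    intro a b
    fin_cases a <;> fin_cases b <;>
      simp [DFunLike.coe, diamond, deleteEdges, Sym2.eq, Sym2.rel_iff', hwy, hwz, hxy, hxz, hyz,
        hwy.symm, hwz.symm, hxy.symm, hxz.symm, hyz.symm, hwx, hxw, G.irrefl]

theorem stmt_6 {V : Type*} (G : SimpleGraph V)
    (hD : ¬ Nonempty (diamond ↪g G))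
    (v : Fin 5 → V) (hv : Function.Injective v)
    (hC5 : ∀ i j, G.Adj (v i) (v j) ↔ j = i + 1 ∨ i = j + 1)
    (A : Fin 5 → Set V)
    (hA : ∀ i, A i = {u | u ∉ Set.range v ∧ ∀ j, G.Adj u (v j) ↔ j = i})
    (B : Fin 5 → Set V)
    (hB : ∀ i, B i = {u | u ∉ Set.range v ∧ ∀ j, G.Adj u (v j) ↔ (j = i ∨ j = i + 1)}) :
    ∀ i, ∀ b ∈ B i, ∀ a ∈ A i ∪ A (i + 1), ¬ G.Adj b a := by
  intro i b hb a ha hadj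
  rw [hB] at hb
  obtain ⟨hbr, hbadj⟩ := hb
  have hbi : G.Adj b (v i) := (hbadj i).2 (Or.inl rfl)
  have hbi1 : G.Adj b (v (i + 1)) := (hbadj (i + 1)).2 (Or.inr rfl)
  have hvii1 : G.Adj (v i) (v (i + 1)) := (hC5 i (i + 1)).2 (Or.inl rfl)
  cases ha with
  | inl ha =>
    rw [hA] at ha
    obtain ⟨har, haadj⟩ := ha
    have hai : G.Adj a (v i) := (haadj i).2 rfl
    have hnai1 : ¬ G.Adj a (v (i + 1)) := fun h => by
      have := (haadj (i + 1)).1 h; omega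
    exact hD (diamond_embed hnai1 (fun h => har ⟨i + 1, h.symm⟩)
      hadj.symm hai hbi1.symm hvii1.symm hbi)
  | inr ha =>
    rw [hA] at ha
    obtain ⟨har, haadj⟩ := ha
    have hai1 : G.Adj a (v (i + 1)) := (haadj (i + 1)).2 rfl
    have hnai : ¬ G.Adj a (v i) := fun h => by
      have := (haadj i).1 h; omega
    exact hD (diamond_embed hnai (fun h => har ⟨i, h.symm⟩)
      hadj.symm hai1 hbi.symm hvii1 hbi1)
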